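/- arXiv:2007.11774 — 2 statements merged into one kernel-verified Lean document; each statement's English description precedes it below -/
import Mathlib

section
/- Let n ≥ 2 and let σ = (1,a,a,...,a) ∈ ℤ^{n+1} with a ≥ 1 an integer. If there exists v ∈ ℤ^{n+1} with ⟨v,v⟩ = 5 and ⟨v,σ⟩ = 0, then a = 2. -/
theorem one_a_dots_a_norm_five (n : ℕ) (hn : 2 ≤ n) (a : ℤ) (ha : 1 ≤ a)
    (σ : Fin (n + 1) → ℤ)
    (hσ : σ = fun i => if i = 0 then (1 : ℤ) else a)
    (hv : ∃ v : Fin (n + 1) → ℤ,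
      (∑ k, v k * v k = 5) ∧ (∑ k, v k * σ k = 0)) :
    a = 2 := by
  obtain ⟨v, h1, h2⟩ := hv
  subst hσ
  rw [Fin.sum_univ_succ] at h1 h2
  simp only [Fin.succ_ne_zero, if_false, if_true, ite_true, ite_false, eq_self_iff_true,
    mul_one] at h2
  set S : ℤ := ∑ i : Fin n, v i.succ with hS
  set Q : ℤ := ∑ i : Fin n, v i.succ * v i.succ with hQ
  have hsum : ∑ i : Fin n, v i.succ * a = S * a := by
    rw [hS, Finset.sum_mul]
  rw [hsum] at h2
  have hv0 : v 0 = -(S * a) := by linarith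
  rw [hv0] at h1
  have hQ0 : 0 ≤ Q := Finset.sum_nonneg fun i _ => mul_self_nonneg _
  have hpar : 2 ∣ (Q - S) := by
    rw [hQ, hS, ← Finset.sum_sub_distrib]
    refine Finset.dvd_sum fun i _ => ?_
    have : v i.succ * v i.succ - v i.succ = (v i.succ - 1) * ((v i.succ - 1) + 1) := by ring
    rw [this]
    exact (Int.even_mul_succ_self (v i.succ - 1)).two_dvd
  have key : S * S * (a * a) + Q = 5 := by nlinarith [h1]
  obtain ⟨k, hk⟩ := hpar
  have haa : 1 ≤ a * a := by nlinarith
  have hSS : S * S ≤ 5 := by nlinarith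
  have hSlb : -2 ≤ S := by nlinarith [sq_nonneg (S + 2)]
  have hSub : S ≤ 2 := by nlinarith [sq_nonneg (S - 2)]
  interval_cases S
  · -- S = -2 : Q = 5 - 4a², Q + 2 even ⇒ 7 - 4a² even, contradiction
    exfalso
    have hQe : Q = 5 - 4 * (a * a) := by linear_combination key
    obtain ⟨b, hb⟩ : ∃ b, a * a = b := ⟨_, rfl⟩
    rw [hb] at hQe
    omega
  · -- S = -1
    have hQe : Q = 5 - a * a := by linear_combination key
    have haev : Even a := by
      rcases Int.even_or_odd a with h | h
      · exact h
      · exfalso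
        obtain ⟨m, hm⟩ := h
        rw [hm] at hQe
        have hQe' : Q = 4 - 4 * m - 4 * (m * m) := by linear_combination hQe
        obtain ⟨b, hb⟩ : ∃ b, m * m = b := ⟨_, rfl⟩
        rw [hb] at hQe'
        omega
    have ha2 : a ≤ 2 := by nlinarith [sq_nonneg (a - 2)]
    obtain ⟨m, hm⟩ := haev
    omega
  · -- S = 0 : Q = 5 but Q even
    exfalso
    have hQe : Q = 5 := by linear_combination key
    omega
  · -- S = 1
    have hQe : Q = 5 - a * a := by linear_combination key
    have haev : Even a := by
      rcases Int.even_or_odd a with h | h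
      · exact h
      · exfalso
        obtain ⟨m, hm⟩ := h
        rw [hm] at hQe
        have hQe' : Q = 4 - 4 * m - 4 * (m * m) := by linear_combination hQe
        obtain ⟨b, hb⟩ : ∃ b, m * m = b := ⟨_, rfl⟩
        rw [hb] at hQe'
        omega
    have ha2 : a ≤ 2 := by nlinarith [sq_nonneg (a - 2)]
    obtain ⟨m, hm⟩ := haev
    omega
  · -- S = 2
    exfalso
    have hQe : Q = 5 - 4 * (a * a) := by linear_combination key
    obtain ⟨b, hb⟩ : ∃ b, a * a = b := ⟨_, rfl⟩
    rw [hb] at hQe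
    omega
end

section
/- Let n ≥ 2 and let σ = (1,1,...,1,b) ∈ ℤ^{n+1} with b ≥ 1 an integer (n copies of 1). If there exists v ∈ ℤ^{n+1} with ⟨v,v⟩ = 5 and ⟨v,σ⟩ = 0, then b ∈ {1, 2, 4}. -/
lemma abs_le_self_mul_self (x : ℤ) : |x| ≤ x * x := by
  rcases eq_or_ne x 0 with rfl | hx
  · simp
  · have h3 : 1 ≤ |x| := Int.one_le_abs hx
    nlinarith [abs_mul_abs_self x]

theorem ones_b_norm_five (n : ℕ) (hn : 2 ≤ n) (b : ℤ) (hb : 1 ≤ b)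
    (σ : Fin (n + 1) → ℤ)
    (hσ : σ = fun i => if i = Fin.last n then b else (1 : ℤ))
    (hv : ∃ v : Fin (n + 1) → ℤ,
      (∑ k, v k * v k = 5) ∧ (∑ k, v k * σ k = 0)) :
    b = 1 ∨ b = 2 ∨ b = 4 := by
  obtain ⟨v, hv5, hv0⟩ := hv
  subst hσ
  rw [Fin.sum_univ_castSucc] at hv5 hv0
  have hne : ∀ i : Fin n, (Fin.castSucc i : Fin (n+1)) ≠ Fin.last n :=
    fun i => Fin.ne_of_lt (Fin.castSucc_lt_last i)
  simp only [hne, if_neg, if_pos rfl, mul_one, ite_true, ite_false] at hv0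
  set c := v (Fin.last n) with hc
  set A := ∑ i : Fin n, v (Fin.castSucc i) * v (Fin.castSucc i) with hA
  set S := ∑ i : Fin n, v (Fin.castSucc i) with hS
  have habs : |S| ≤ A := by
    calc |S| ≤ ∑ i : Fin n, |v (Fin.castSucc i)| := Finset.abs_sum_le_sum_abs _ _
    _ ≤ A := Finset.sum_le_sum fun i _ => abs_le_self_mul_self _
  have hpar : Even (A - S) := by
    rw [hA, hS, ← Finset.sum_sub_distrib]
    apply Finset.even_sum
    intro i _
    have : v (Fin.castSucc i) * v (Fin.castSucc i) - v (Fin.castSucc i)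
        = (v (Fin.castSucc i) - 1) * ((v (Fin.castSucc i) - 1) + 1) := by ring
    rw [this]
    exact Int.even_mul_succ_self _
  obtain ⟨k, hk⟩ := hpar
  have hAnn : 0 ≤ A := Finset.sum_nonneg fun i _ => mul_self_nonneg _
  have hSle : -A ≤ S ∧ S ≤ A := abs_le.mp habs
  have hc2 : -2 ≤ c ∧ c ≤ 2 := by constructor <;> nlinarith
  obtain ⟨hc1, hc2⟩ := hc2
  interval_cases c <;> omega
end
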